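/- Let P(n,k) denote the number of permutations of {1,...,n} with exactly k valleys. Then P(n,k) = 2(k+1)·P(n-1,k) + (n-2k)·P(n-1,k-1) for n ≥ 2 and k ≥ 1. -/

import Mathlib

/-- The word of the permutation, as a function `ℕ → ℕ` (junk value `0` outside range). -/
def permWord {n : ℕ} (π : Equiv.Perm (Fin n)) (j : ℕ) : ℕ :=
  if h : j < n then (π ⟨j, h⟩).val else 0

/-- The number of valleys of a permutation: interior positions `j` whose entry is strictly
smaller than both neighbours. -/
def valleyCount {n : ℕ} (π : Equiv.Perm (Fin n)) : ℕ :=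
  ((Finset.Ioo 0 (n - 1)).filter
    (fun j => permWord π j < permWord π (j - 1) ∧ permWord π j < permWord π (j + 1))).card

/-- `P n k`: the number of permutations of `{1,…,n}` with exactly `k` valleys. -/
noncomputable def P (n k : ℕ) : ℕ :=
  Nat.card {π : Equiv.Perm (Fin n) // valleyCount π = k}

namespace ValleyRec


/-- `dab prev l` counts descent-ascent (true-false) adjacent pairs in `prev :: l`. -/
def dab : Bool → List Bool → ℕ
  | _, [] => 0
  | prev, b :: t => (if prev = true ∧ b = false then 1 else 0) + dab b t

/-- Replace the `p`-th element of `l` by the two elements `false, true`. -/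
def R : List Bool → ℕ → List Bool
  | [], _ => []
  | _ :: t, 0 => false :: true :: t
  | b :: t, p + 1 => b :: R t p

/-- The insertion at position `p` (scanning with previous element `prev`) is "good",
 i.e. does not create a new valley. -/
def goodAt : Bool → List Bool → ℕ → Bool
  | _, [], _ => true
  | prev, b :: t, 0 => if b then !prev else t.head?.getD true
  | _, b :: t, p + 1 => goodAt b t p

def gc : Bool → List Bool → ℕ
  | _, [] => 0
  | prev, b :: t => (if goodAt prev (b :: t) 0 then 1 else 0) + gc b t

theorem dab_R (l : List Bool) : ∀ (p : ℕ) (prev : Bool), p < l.length →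
    dab prev (R l p) = dab prev l + (if goodAt prev l p then 0 else 1) := by
  induction l with
  | nil => intro p prev h; simp at h
  | cons b t ih =>
    intro p prev h
    match p with
    | 0 =>
      cases t with
      | nil => cases prev <;> cases b <;> simp [R, dab, goodAt]
      | cons c t' => cases prev <;> cases b <;> cases c <;> simp [R, dab, goodAt] <;> omega
    | p + 1 =>
      have hp : p < t.length := by simpa using h
      simp only [R, dab, goodAt, ih p b hp]
      exact (add_assoc _ _ _).symm

theorem gc_sum (l : List Bool) : ∀ prev : Bool,
    (∑ p ∈ Finset.range l.length, if goodAt prev l p then 1 else 0) = gc prev l := by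
  induction l with
  | nil => intro prev; simp [gc]
  | cons b t ih =>
    intro prev
    rw [List.length_cons, Finset.sum_range_succ']
    simp only [goodAt, gc]
    erw [ih b]
    ring

theorem gc_eq (l : List Bool) : ∀ prev : Bool,
    gc prev l + (if (if prev then true else l.head?.getD true) = true then 1 else 0)
      = 2 * dab prev l + (if prev = false then 1 else 0)
        + (if l.getLastD prev = true then 1 else 0) := by
  induction l with
  | nil => intro prev; cases prev <;> simp [gc, dab]
  | cons b t ih =>
    intro prev
    have h := ih b
    rw [List.getLastD_cons]
    cases t with
    | nil => cases prev <;> cases b <;> simp_all [gc, dab, goodAt]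
    | cons c t' =>
      simp only [gc, goodAt, dab] at h ⊢
      cases prev <;> cases b <;> cases c <;> simp_all <;> omega




variable {M : ℕ}

/-- descent at slot `j` (comparing entries `j-1` and `j`). -/
def sl (σ : Equiv.Perm (Fin M)) (j : ℕ) : Bool := decide (permWord σ j < permWord σ (j - 1))

/-- bordered slot string, as a function. -/
def bfun (σ : Equiv.Perm (Fin M)) (j : ℕ) : Bool :=
  if j = 0 then false else if j = M then true else sl σ j

/-- bordered slot string as a list of length `M + 1`. -/
def Bd (σ : Equiv.Perm (Fin M)) : List Bool := (List.range (M + 1)).map (bfun σ)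

theorem permWord_lt (σ : Equiv.Perm (Fin M)) (hM : 1 ≤ M) (j : ℕ) : permWord σ j < M := by
  unfold permWord
  split
  · exact (σ _).isLt
  · omega

theorem permWord_inj (σ : Equiv.Perm (Fin M)) {i j : ℕ} (hi : i < M) (hj : j < M)
    (h : permWord σ i = permWord σ j) : i = j := by
  unfold permWord at h
  rw [dif_pos hi, dif_pos hj] at h
  have := σ.injective (Fin.val_injective h)
  simpa [Fin.ext_iff] using this

theorem dab_concat (x : Bool) : ∀ (l : List Bool) (prev : Bool),
    dab prev (l ++ [x]) = dab prev l
      + (if l.getLastD prev = true ∧ x = false then 1 else 0) := by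
  intro l
  induction l with
  | nil => intro prev; simp [dab]
  | cons b t ih =>
    intro prev
    simp only [List.cons_append, dab, List.append_eq, ih b, List.getLastD_cons]
    ring

theorem getLastD_map_range (f : ℕ → Bool) (K : ℕ) (d : Bool) (hK : 0 < K) :
    ((List.range K).map f).getLastD d = f (K - 1) := by
  obtain ⟨K, rfl⟩ := Nat.exists_eq_add_of_le hK
  rw [add_comm, List.range_succ, List.map_append]
  simp

theorem dab_map_range (f : ℕ → Bool) : ∀ (K : ℕ) (prev : Bool),
    dab prev ((List.range K).map f) = ∑ j ∈ Finset.range K,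
      (if (if j = 0 then prev else f (j - 1)) = true ∧ f j = false then 1 else 0) := by
  intro K
  induction K with
  | zero => intro prev; simp [dab]
  | succ K ih =>
    intro prev
    rw [List.range_succ, List.map_append, List.map_singleton, dab_concat, ih,
      Finset.sum_range_succ]
    congr 1
    rcases Nat.eq_zero_or_pos K with h | h
    · subst h; simp [dab]
    · rw [getLastD_map_range _ _ _ h]
      have : K ≠ 0 := by omega
      simp [this, List.map_append]

theorem vc_eq_dab (σ : Equiv.Perm (Fin M)) (hM : 1 ≤ M) :
    valleyCount σ = dab false (Bd σ) := by
  rw [Bd, dab_map_range, valleyCount, Finset.card_filter]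
  rw [show Finset.range (M + 1) = Finset.Ioo 1 M ∪ (Finset.range (M+1) \ Finset.Ioo 1 M) by
    rw [Finset.union_sdiff_of_subset]
    intro x hx
    simp only [Finset.mem_Ioo] at hx
    simp only [Finset.mem_range]
    omega]
  rw [Finset.sum_union (Finset.disjoint_sdiff)]
  have hzero : ∀ j ∈ Finset.range (M+1) \ Finset.Ioo 1 M,
      (if (if j = 0 then false else bfun σ (j - 1)) = true ∧ bfun σ j = false then 1 else 0)
        = 0 := by
    intro j hj
    simp only [Finset.mem_sdiff, Finset.mem_range, Finset.mem_Ioo, not_and, not_lt] at hj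
    obtain ⟨hj1, hj2⟩ := hj
    by_cases h0 : j = 0
    · simp [h0]
    · have hjM : j = 1 ∨ j = M := by omega
      rcases hjM with h | h
      · subst h; simp [bfun]
      · have hM0 : M ≠ 0 := by omega
        have hb : bfun σ j = true := by rw [h]; simp [bfun, hM0]
        simp [hb]
  rw [Finset.sum_eq_zero hzero, add_zero]
  have himg : Finset.Ioo 1 M = (Finset.Ioo 0 (M - 1)).image (· + 1) := by
    ext x
    simp only [Finset.mem_Ioo, Finset.mem_image]
    constructor
    · intro h; exact ⟨x - 1, by omega, by omega⟩
    · rintro ⟨y, hy, rfl⟩; omega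
  rw [himg, Finset.sum_image (by intro a _ b _ h; simp only at h; omega)]
  apply Finset.sum_congr rfl
  intro j hj
  simp only [Finset.mem_Ioo] at hj
  obtain ⟨hj0, hjM⟩ := hj
  have h1 : j + 1 ≠ 0 := by omega
  have h2 : j + 1 ≠ M := by omega
  have h3 : j ≠ 0 := by omega
  have h4 : j ≠ M := by omega
  simp only [h1, h2, if_false, Nat.add_sub_cancel, h3, h4, bfun, if_neg h3, if_neg h4,
    if_neg h1, if_neg h2]
  by_cases hd : permWord σ j < permWord σ (j - 1)
  · have hne : permWord σ j ≠ permWord σ (j + 1) := by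
      intro h
      have := permWord_inj σ (by omega) (by omega) h
      omega
    have : (permWord σ j < permWord σ (j + 1)) ↔ ¬ (permWord σ (j+1) < permWord σ j) := by
      constructor
      · omega
      · intro h; omega
    simp [sl, hd, Nat.add_sub_cancel, this]
  · simp [sl, hd, Nat.add_sub_cancel]

/-- Insert the maximal value at position `p`. -/
def ins (σ : Equiv.Perm (Fin M)) (p : Fin (M + 1)) : Equiv.Perm (Fin (M + 1)) :=
  (finSuccEquiv' p).trans ((Equiv.optionCongr σ).trans (finSuccEquiv' (Fin.last M)).symm)

theorem ins_apply_self (σ : Equiv.Perm (Fin M)) (p : Fin (M + 1)) :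
    ins σ p p = Fin.last M := by
  simp [ins]

theorem ins_apply_succAbove (σ : Equiv.Perm (Fin M)) (p : Fin (M + 1)) (i : Fin M) :
    ins σ p (p.succAbove i) = (σ i).castSucc := by
  simp [ins, ← Fin.succAbove_last]

theorem permWord_ins (σ : Equiv.Perm (Fin M)) (p : Fin (M + 1)) (j : ℕ) (hj : j ≤ M) :
    permWord (ins σ p) j =
      if j < p.val then permWord σ j
      else if j = p.val then M
      else permWord σ (j - 1) := by
  have hjlt : j < M + 1 := by omega
  rcases lt_trichotomy j p.val with h | h | h
  · have hjM : j < M := by have := p.isLt; omega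
    have e1 : (⟨j, hjlt⟩ : Fin (M + 1)) = p.succAbove ⟨j, hjM⟩ := by
      rw [Fin.succAbove_of_castSucc_lt p ⟨j, hjM⟩ (by simpa [Fin.lt_def] using h)]
      rfl
    rw [if_pos h]
    unfold permWord
    rw [dif_pos hjlt, dif_pos hjM, e1, ins_apply_succAbove]
    rfl
  · rw [if_neg (by omega), if_pos h]
    unfold permWord
    rw [dif_pos hjlt]
    have : (⟨j, hjlt⟩ : Fin (M + 1)) = p := by simp [Fin.ext_iff, h]
    rw [this, ins_apply_self]
    rfl
  · rw [if_neg (by omega), if_neg (by omega)]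
    have h1 : 1 ≤ j := by omega
    have hjM : j - 1 < M := by omega
    have e1 : (⟨j, hjlt⟩ : Fin (M + 1)) = p.succAbove ⟨j - 1, hjM⟩ := by
      rw [Fin.succAbove_of_le_castSucc p ⟨j - 1, hjM⟩ (by simp [Fin.le_def]; omega)]
      simp [Fin.ext_iff, Fin.val_succ]
      omega
    unfold permWord
    rw [dif_pos hjlt, dif_pos hjM, e1, ins_apply_succAbove]
    rfl








/-- Delete the maximal value. -/
def delp (π : Equiv.Perm (Fin (M + 1))) : Equiv.Perm (Fin M) :=
  Equiv.removeNone
    ((finSuccEquiv' (π.symm (Fin.last M))).symm.trans (π.trans (finSuccEquiv' (Fin.last M))))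

theorem delp_castSucc (π : Equiv.Perm (Fin (M + 1))) (i : Fin M) :
    Fin.castSucc (delp π i) = π ((π.symm (Fin.last M)).succAbove i) := by
  have hne : π ((π.symm (Fin.last M)).succAbove i) ≠ Fin.last M := by
    intro h
    apply Fin.succAbove_ne (π.symm (Fin.last M)) i
    apply π.injective
    rw [h, Equiv.apply_symm_apply]
  set E := ((finSuccEquiv' (π.symm (Fin.last M))).symm.trans
    (π.trans (finSuccEquiv' (Fin.last M)))) with hEdef
  have hE : E (some i) =
      some ((π ((π.symm (Fin.last M)).succAbove i)).castLT (Fin.val_lt_last hne)) := by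
    rw [hEdef]
    simp only [Equiv.trans_apply, finSuccEquiv'_symm_some]
    rw [finSuccEquiv'_last_apply hne]
  have h2 : some (Equiv.removeNone E i) = E (some i) := Equiv.removeNone_some _ ⟨_, hE⟩
  rw [hE] at h2
  have h3 : delp π i = (π ((π.symm (Fin.last M)).succAbove i)).castLT (Fin.val_lt_last hne) :=
    Option.some_injective _ h2
  rw [h3]
  simp [Fin.ext_iff]

theorem delp_ins (σ : Equiv.Perm (Fin M)) (p : Fin (M + 1)) : delp (ins σ p) = σ := by
  have hp : (ins σ p).symm (Fin.last M) = p := by rw [Equiv.symm_apply_eq, ins_apply_self]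
  ext i
  have := delp_castSucc (ins σ p) i
  rw [hp, ins_apply_succAbove] at this
  exact congrArg Fin.val (Fin.castSucc_injective _ this)

theorem ins_delp (π : Equiv.Perm (Fin (M + 1))) : ins (delp π) (π.symm (Fin.last M)) = π := by
  ext j
  rcases eq_or_ne j (π.symm (Fin.last M)) with rfl | hne
  · rw [ins_apply_self]
    exact congrArg Fin.val (Equiv.apply_symm_apply π _).symm
  · obtain ⟨i, rfl⟩ := Fin.exists_succAbove_eq hne
    rw [ins_apply_succAbove, delp_castSucc]

/-- Insertion as an equivalence. -/
def insEquiv (M : ℕ) : Equiv.Perm (Fin M) × Fin (M + 1) ≃ Equiv.Perm (Fin (M + 1)) where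
  toFun x := ins x.1 x.2
  invFun π := (delp π, π.symm (Fin.last M))
  left_inv x := by
    obtain ⟨σ, p⟩ := x
    have hp : (ins σ p).symm (Fin.last M) = p := by rw [Equiv.symm_apply_eq, ins_apply_self]
    rw [Prod.ext_iff]
    exact ⟨delp_ins σ p, hp⟩
  right_inv π := ins_delp π



theorem length_R : ∀ (l : List Bool) (p : ℕ), p < l.length → (R l p).length = l.length + 1 := by
  intro l
  induction l with
  | nil => intro p h; simp at h
  | cons b t ih =>
    intro p h
    match p with
    | 0 => simp [R]
    | p + 1 =>
      have : p < t.length := by simpa using h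
      simp [R, ih p this]

theorem getD_R : ∀ (l : List Bool) (p : ℕ), p < l.length → ∀ i : ℕ,
    (R l p).getD i false = if i < p then l.getD i false else if i = p then false
      else if i = p + 1 then true else l.getD (i - 1) false := by
  intro l
  induction l with
  | nil => intro p h; simp at h
  | cons b t ih =>
    intro p hp i
    match p with
    | 0 =>
      match i with
      | 0 => simp [R]
      | 1 => simp [R]
      | i + 2 =>
        simp only [R, List.getD_cons_succ]
        rw [if_neg (by omega : ¬ i + 2 < 0), if_neg (by omega : ¬ i + 2 = 0),
          if_neg (by omega : ¬ i + 2 = 0 + 1), show i + 2 - 1 = i + 1 by omega,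
          List.getD_cons_succ]
    | p + 1 =>
      have hpt : p < t.length := by simpa using hp
      match i with
      | 0 => simp [R]
      | i + 1 =>
        have key : (R (b :: t) (p + 1)).getD (i + 1) false = (R t p).getD i false := by
          simp [R, List.getD_cons_succ]
        rw [key, ih p hpt i]
        by_cases h1 : i < p
        · rw [if_pos h1, if_pos (by omega : i + 1 < p + 1), List.getD_cons_succ]
        · rw [if_neg h1, if_neg (by omega : ¬ i + 1 < p + 1)]
          by_cases h2 : i = p
          · rw [if_pos h2, if_pos (by omega : i + 1 = p + 1)]
          · rw [if_neg h2, if_neg (by omega : ¬ i + 1 = p + 1)]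
            by_cases h3 : i = p + 1
            · rw [if_pos h3, if_pos (by omega : i + 1 = p + 1 + 1)]
            · rw [if_neg h3, if_neg (by omega : ¬ i + 1 = p + 1 + 1)]
              have hi1 : 1 ≤ i := by omega
              rw [show i + 1 - 1 = (i - 1) + 1 by omega, List.getD_cons_succ]

theorem getD_Bd {K : ℕ} (f : ℕ → Bool) {i : ℕ} (hi : i < K) :
    (((List.range K).map f).getD i false) = f i := by
  rw [List.getD_eq_getElem _ _ (by simpa using hi)]
  simp

theorem Bd_ins (σ : Equiv.Perm (Fin M)) (p : Fin (M + 1)) (hM : 1 ≤ M) :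
    Bd (ins σ p) = R (Bd σ) p.val := by
  have hq : p.val ≤ M := Fin.is_le p
  have hlen : (Bd σ).length = M + 1 := by simp [Bd]
  have hplen : p.val < (Bd σ).length := by omega
  apply List.ext_getElem
  · rw [length_R _ _ hplen, hlen]
    simp [Bd]
  · intro i hi1 hi2
    have hiM : i < M + 2 := by simp [Bd] at hi1; omega
    rw [← List.getD_eq_getElem _ false hi1, ← List.getD_eq_getElem _ false hi2]
    rw [getD_R _ _ hplen i, Bd, getD_Bd _ hiM]
    by_cases hi0 : i = 0
    · subst hi0
      by_cases h0 : 0 < p.val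
      · rw [if_pos h0, Bd, getD_Bd _ (by omega : (0:ℕ) < M + 1)]
        simp [bfun]
      · rw [if_neg h0, if_pos (by omega : (0:ℕ) = p.val)]
        simp [bfun]
    · by_cases hiM1 : i = M + 1
      · subst hiM1
        rw [if_neg (by omega), if_neg (by omega)]
        have hl : bfun (ins σ p) (M + 1) = true := by simp [bfun]
        rw [hl]
        by_cases hpm : p.val = M
        · rw [if_pos (by omega : M + 1 = p.val + 1)]
        · rw [if_neg (by omega : ¬ M + 1 = p.val + 1), Bd,
            getD_Bd _ (by omega : M + 1 - 1 < M + 1), show M + 1 - 1 = M by omega]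
          have hM0 : M ≠ 0 := by omega
          simp [bfun, hM0]
      · have hi1 : 1 ≤ i := by omega
        have hiM' : i ≤ M := by omega
        have hl : bfun (ins σ p) i = sl (ins σ p) i := by
          simp [bfun, hi0, hiM1]
        rw [hl]
        have wI := permWord_ins σ p i (by omega)
        have wI1 := permWord_ins σ p (i - 1) (by omega)
        rcases lt_trichotomy i p.val with hc | hc | hc
        · rw [if_pos hc, Bd, getD_Bd _ (by omega : i < M + 1)]
          rw [if_pos hc] at wI
          rw [if_pos (by omega : i - 1 < p.val)] at wI1
          have hb : bfun σ i = sl σ i := by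
            simp only [bfun]
            rw [if_neg hi0, if_neg (by omega : ¬ i = M)]
          rw [hb]
          simp only [sl, wI, wI1]
        · rw [if_neg (by omega : ¬ i < p.val), if_pos hc]
          rw [if_neg (by omega : ¬ i < p.val), if_pos hc] at wI
          rw [if_pos (by omega : i - 1 < p.val)] at wI1
          simp only [sl, wI, wI1]
          have hlt := permWord_lt σ hM (i - 1)
          simp only [decide_eq_false_iff_not]
          omega
        · by_cases hc2 : i = p.val + 1
          · rw [if_neg (by omega : ¬ i < p.val), if_neg (by omega : ¬ i = p.val), if_pos hc2]
            rw [if_neg (by omega : ¬ i < p.val), if_neg (by omega : ¬ i = p.val)] at wI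
            rw [if_neg (by omega : ¬ i - 1 < p.val), if_pos (by omega : i - 1 = p.val)] at wI1
            simp only [sl, wI, wI1]
            have hlt := permWord_lt σ hM (i - 1)
            simp only [decide_eq_true_eq]
            omega
          · rw [if_neg (by omega : ¬ i < p.val), if_neg (by omega : ¬ i = p.val), if_neg hc2,
              Bd, getD_Bd _ (by omega : i - 1 < M + 1)]
            rw [if_neg (by omega : ¬ i < p.val), if_neg (by omega : ¬ i = p.val)] at wI
            rw [if_neg (by omega : ¬ i - 1 < p.val), if_neg (by omega : ¬ i - 1 = p.val)] at wI1
            have hb : bfun σ (i - 1) = sl σ (i - 1) := by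
              simp only [bfun]
              rw [if_neg (by omega : ¬ i - 1 = 0), if_neg (by omega : ¬ i - 1 = M)]
            rw [hb]
            simp only [sl, wI, wI1]

end ValleyRec

namespace ValleyRec

theorem P_eq_sum (m k : ℕ) :
    P m k = ∑ π : Equiv.Perm (Fin m), (if valleyCount π = k then 1 else 0) := by
  rw [P, Nat.card_eq_fintype_card, Fintype.card_subtype, Finset.card_filter]

theorem vc_ins (σ : Equiv.Perm (Fin M)) (p : Fin (M + 1)) (hM : 1 ≤ M) :
    valleyCount (ins σ p) = valleyCount σ
      + (if goodAt false (Bd σ) p.val then 0 else 1) := by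
  have hp : p.val < (Bd σ).length := by
    have := p.isLt
    simp only [Bd, List.length_map, List.length_range]
    omega
  rw [vc_eq_dab (ins σ p) (by omega : 1 ≤ M + 1), Bd_ins σ p hM, dab_R (Bd σ) p.val false hp,
    ← vc_eq_dab σ hM]

theorem sum_good (σ : Equiv.Perm (Fin M)) (hM : 1 ≤ M) :
    (∑ p : Fin (M + 1), if goodAt false (Bd σ) p.val then 1 else 0)
      = 2 * valleyCount σ + 2 := by
  have hlen : (Bd σ).length = M + 1 := by
    simp [Bd]
  rw [Fin.sum_univ_eq_sum_range (fun j => if goodAt false (Bd σ) j then 1 else 0) (M + 1)]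
  rw [← hlen, gc_sum]
  have hhead : (Bd σ).head?.getD true = false := by
    rw [Bd, List.range_succ_eq_map]
    simp [bfun]
  have hlast : (Bd σ).getLastD false = true := by
    rw [Bd, getLastD_map_range _ _ _ (by omega : 0 < M + 1)]
    have hM0 : M ≠ 0 := by omega
    simp [bfun, hM0]
  have h := gc_eq (Bd σ) false
  rw [hhead, hlast] at h
  simp only [Bool.false_eq_true, if_false, if_true] at h
  have hvc := vc_eq_dab σ hM
  omega

theorem valley_main (M k : ℕ) (hM : 1 ≤ M) (hk : 1 ≤ k) :
    P (M + 1) k = (2 * k + 2) * P M k + (M + 1 - 2 * k) * P M (k - 1) := by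
  have S1 : ∀ σ : Equiv.Perm (Fin M), valleyCount σ = k →
      (∑ p : Fin (M + 1), if valleyCount (ins σ p) = k then 1 else 0) = 2 * k + 2 := by
    intro σ hσ
    have hg := sum_good σ hM
    rw [hσ] at hg
    rw [← hg]
    refine Finset.sum_congr rfl (fun p _ => ?_)
    rw [vc_ins σ p hM, hσ]
    split_ifs <;> omega
  have S2 : ∀ σ : Equiv.Perm (Fin M), valleyCount σ = k - 1 →
      (∑ p : Fin (M + 1), if valleyCount (ins σ p) = k then 1 else 0) = M + 1 - 2 * k := by
    intro σ hσ
    have hg := sum_good σ hM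
    rw [hσ] at hg
    have htot : (∑ p : Fin (M + 1), if valleyCount (ins σ p) = k then 1 else 0)
        + (∑ p : Fin (M + 1), if goodAt false (Bd σ) p.val then 1 else 0)
        = M + 1 := by
      rw [← Finset.sum_add_distrib]
      have : ∀ p : Fin (M + 1),
          (if valleyCount (ins σ p) = k then 1 else 0)
            + (if goodAt false (Bd σ) p.val then 1 else 0) = 1 := by
        intro p
        rw [vc_ins σ p hM, hσ]
        split_ifs <;> omega
      rw [Finset.sum_congr rfl (fun p _ => this p)]
      simp
    omega
  have S3 : ∀ σ : Equiv.Perm (Fin M), ¬ valleyCount σ = k → ¬ valleyCount σ = k - 1 →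
      (∑ p : Fin (M + 1), if valleyCount (ins σ p) = k then 1 else 0) = 0 := by
    intro σ h1 h2
    refine Finset.sum_eq_zero (fun p _ => ?_)
    rw [vc_ins σ p hM]
    split_ifs <;> omega
  have step : ∀ σ : Equiv.Perm (Fin M),
      (∑ p : Fin (M + 1), if valleyCount (ins σ p) = k then 1 else 0)
        = (2 * k + 2) * (if valleyCount σ = k then 1 else 0)
          + (M + 1 - 2 * k) * (if valleyCount σ = k - 1 then 1 else 0) := by
    intro σ
    by_cases h1 : valleyCount σ = k
    · rw [S1 σ h1, if_pos h1, if_neg (by omega), mul_one, mul_zero, add_zero]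
    · by_cases h2 : valleyCount σ = k - 1
      · rw [S2 σ h2, if_neg h1, if_pos h2, mul_one, mul_zero, zero_add]
      · rw [S3 σ h1 h2, if_neg h1, if_neg h2, mul_zero, mul_zero, add_zero]
  rw [P_eq_sum (M + 1) k,
    ← Equiv.sum_comp (insEquiv M) (fun π => if valleyCount π = k then 1 else 0)]
  have : ∀ x : Equiv.Perm (Fin M) × Fin (M + 1), insEquiv M x = ins x.1 x.2 := fun _ => rfl
  simp only [this]
  rw [Fintype.sum_prod_type]
  rw [Finset.sum_congr rfl (fun σ _ => step σ), Finset.sum_add_distrib,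
    ← Finset.mul_sum, ← Finset.mul_sum, ← P_eq_sum M k, ← P_eq_sum M (k - 1)]

end ValleyRec

open ValleyRec in
theorem valley_recurrence (n k : ℕ) (hn : 2 ≤ n) (hk : 1 ≤ k) :
    P n k = 2 * (k + 1) * P (n - 1) k + (n - 2 * k) * P (n - 1) (k - 1) := by
  obtain ⟨M, rfl⟩ : ∃ M, n = M + 1 := ⟨n - 1, by omega⟩
  have hM : 1 ≤ M := by omega
  have h := valley_main M k hM hk
  rw [show M + 1 - 1 = M by omega, show 2 * (k + 1) = 2 * k + 2 by ring]
  exact h
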